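/- Let ρ₁, …, ρ_K be 2×2 density matrices (qubit states) and p₁, …, p_K nonnegative weights summing to 1. Then the K×K matrix C_F with entries (C_F)ᵢⱼ = √(pᵢ pⱼ) F(ρᵢ; ρⱼ) is positive semidefinite. -/

import Mathlib

open scoped Classical

open Matrix ComplexOrder

/-- The positive semidefinite square root of a matrix: the unique PSD square root
when the matrix is PSD, and `0` otherwise. -/
noncomputable def msqrt {n : Type*} [Fintype n] [DecidableEq n]
    (A : Matrix n n ℂ) : Matrix n n ℂ :=
  if h : A.PosSemidef then
    (h.1.eigenvectorUnitary : Matrix n n ℂ) * diagonal ((↑) ∘ Real.sqrt ∘ h.1.eigenvalues) *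
      (star h.1.eigenvectorUnitary : Matrix n n ℂ)
  else 0

/-- Fidelity between two states: `F(ρ₁; ρ₂) = (tr √(√ρ₁ · ρ₂ · √ρ₁))²`. -/
noncomputable def fidelity {n : Type*} [Fintype n] [DecidableEq n]
    (ρ₁ ρ₂ : Matrix n n ℂ) : ℝ :=
  ((msqrt (msqrt ρ₁ * ρ₂ * msqrt ρ₁)).trace).re ^ 2

noncomputable def Matrix.PosSemidef.sqrt {n : Type*} [Fintype n] [DecidableEq n]
    {A : Matrix n n ℂ} (h : A.PosSemidef) : Matrix n n ℂ :=
  (h.1.eigenvectorUnitary : Matrix n n ℂ) * diagonal ((↑) ∘ Real.sqrt ∘ h.1.eigenvalues) *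
      (star h.1.eigenvectorUnitary : Matrix n n ℂ)

lemma Matrix.PosSemidef.posSemidef_sqrt {n : Type*} [Fintype n] [DecidableEq n]
    {A : Matrix n n ℂ} (h : A.PosSemidef) : h.sqrt.PosSemidef := by
  unfold Matrix.PosSemidef.sqrt
  have := (posSemidef_diagonal_iff (d := ((↑) ∘ Real.sqrt ∘ h.1.eigenvalues : n → ℂ))).2
    (fun i => by simp [Complex.zero_le_real, Real.sqrt_nonneg])
  exact this.mul_mul_conjTranspose_same (h.1.eigenvectorUnitary : Matrix n n ℂ)

lemma Matrix.PosSemidef.sqrt_mul_self {n : Type*} [Fintype n] [DecidableEq n]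
    {A : Matrix n n ℂ} (h : A.PosSemidef) : h.sqrt * h.sqrt = A := by
  conv_rhs => rw [h.1.spectral_theorem]
  have hU : (star h.1.eigenvectorUnitary : Matrix n n ℂ) * (h.1.eigenvectorUnitary : Matrix n n ℂ) = 1 :=
    Unitary.coe_star_mul_self _
  unfold Matrix.PosSemidef.sqrt
  simp only [Unitary.conjStarAlgAut_apply]
  rw [show ∀ U D V : Matrix n n ℂ, U * D * V * (U * D * V) = U * (D * (V * U) * D) * V by
    intros; simp [Matrix.mul_assoc], hU, Matrix.mul_one, diagonal_mul_diagonal]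
  have hev : ∀ i, Real.sqrt (h.1.eigenvalues i) * Real.sqrt (h.1.eigenvalues i) = h.1.eigenvalues i :=
    fun i => Real.mul_self_sqrt (h.eigenvalues_nonneg i)
  simp only [Function.comp_def, ← Complex.ofReal_mul, hev]
  rfl

lemma psd_det_real {n : Type*} [Fintype n] [DecidableEq n] {A : Matrix n n ℂ}
    (h : A.PosSemidef) : A.det = (A.det.re : ℂ) ∧ 0 ≤ A.det.re := by
  have := h.1.det_eq_prod_eigenvalues
  have h2 : A.det = ((∏ i, h.1.eigenvalues i : ℝ) : ℂ) := by
    rw [this]; push_cast; rfl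
  have hnn : 0 ≤ ∏ i, h.1.eigenvalues i :=
    Finset.prod_nonneg fun i _ => h.eigenvalues_nonneg i
  constructor
  · rw [h2, Complex.ofReal_re]
  · rw [h2, Complex.ofReal_re]; exact hnn

lemma herm_trace_im {n : Type*} [Fintype n] {A : Matrix n n ℂ}
    (h : A.IsHermitian) : A.trace.im = 0 := by
  have := Matrix.trace_conjTranspose A
  rw [h.eq] at this
  have : (starRingEnd ℂ) A.trace = A.trace := this.symm
  exact Complex.conj_eq_iff_im.mp this

lemma trace_sq_fin_two (S : Matrix (Fin 2) (Fin 2) ℂ) :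
    S.trace ^ 2 = (S * S).trace + 2 * S.det := by
  simp [Matrix.trace_fin_two, Matrix.det_fin_two, Matrix.mul_apply, Fin.sum_univ_two]
  ring

lemma trace_msqrt_sq {M : Matrix (Fin 2) (Fin 2) ℂ} (h : M.PosSemidef) :
    ((msqrt M).trace).re ^ 2 = M.trace.re + 2 * Real.sqrt (M.det.re) := by
  rw [show msqrt M = h.sqrt from dif_pos h]
  set S := h.sqrt with hSdef
  have hSpsd : S.PosSemidef := h.posSemidef_sqrt
  obtain ⟨hdet_eq, hdet_nonneg⟩ := psd_det_real hSpsd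
  have him : S.trace.im = 0 := herm_trace_im hSpsd.1
  have hsq : S * S = M := h.sqrt_mul_self
  have h2 : S.trace ^ 2 = M.trace + 2 * S.det := by
    rw [← hsq]; exact trace_sq_fin_two S
  have hdetM : M.det = ((S.det.re ^ 2 : ℝ) : ℂ) := by
    rw [← hsq, Matrix.det_mul, hdet_eq, Complex.ofReal_re]; push_cast; ring
  have hsqrt : Real.sqrt (M.det.re) = S.det.re := by
    rw [hdetM, Complex.ofReal_re, Real.sqrt_sq hdet_nonneg]
  have hre : (S.trace ^ 2).re = S.trace.re ^ 2 := by
    rw [sq, sq, Complex.mul_re, him]; ring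
  have hre2 := congrArg Complex.re h2
  rw [hre] at hre2
  rw [hre2, hsqrt]
  have hdim : S.det.im = 0 := by rw [hdet_eq]; simp
  simp [Complex.add_re, Complex.mul_re, hdim]

lemma fidelity_formula {ρ₁ ρ₂ : Matrix (Fin 2) (Fin 2) ℂ}
    (h1 : ρ₁.PosSemidef) (h2 : ρ₂.PosSemidef) :
    fidelity ρ₁ ρ₂ = ((ρ₁ * ρ₂).trace).re + 2 * Real.sqrt (ρ₁.det.re * ρ₂.det.re) := by
  have hs : msqrt ρ₁ = h1.sqrt := dif_pos h1
  set S := h1.sqrt with hSdef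
  have hSpsd : S.PosSemidef := h1.posSemidef_sqrt
  have hSH : Sᴴ = S := hSpsd.1
  have hsq : S * S = ρ₁ := h1.sqrt_mul_self
  have hM : (S * ρ₂ * S).PosSemidef := by
    have := h2.mul_mul_conjTranspose_same S
    rwa [hSH] at this
  have htr : (S * ρ₂ * S).trace = (ρ₁ * ρ₂).trace := by
    rw [Matrix.trace_mul_cycle, hsq, Matrix.trace_mul_comm]
  obtain ⟨hd1, hn1⟩ := psd_det_real h1
  obtain ⟨hd2, hn2⟩ := psd_det_real h2
  obtain ⟨hdS, hnS⟩ := psd_det_real hSpsd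
  have hdetS : ρ₁.det.re = S.det.re ^ 2 := by
    have : ρ₁.det = S.det * S.det := by rw [← hsq, Matrix.det_mul]
    rw [hdS] at this
    have := congrArg Complex.re this
    simpa [sq] using this
  have hdet : (S * ρ₂ * S).det.re = ρ₁.det.re * ρ₂.det.re := by
    rw [Matrix.det_mul, Matrix.det_mul, hdS, hd2]
    have : ((S.det.re : ℂ) * ρ₂.det.re * S.det.re).re
        = S.det.re * ρ₂.det.re * S.det.re := by simp
    rw [this, hdetS, Complex.ofReal_re]; ring
  rw [fidelity, hs, trace_msqrt_sq hM, htr, hdet]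

lemma trace_mul_re {A B : Matrix (Fin 2) (Fin 2) ℂ} (hB : Bᴴ = B) :
    ((A * B).trace).re =
      ∑ a : Fin 2, ∑ b : Fin 2,
        ((A a b).re * (B a b).re + (A a b).im * (B a b).im) := by
  have e10 : B 1 0 = (starRingEnd ℂ) (B 0 1) := by
    have := congrFun (congrFun hB 1) 0
    rw [Matrix.conjTranspose_apply] at this
    exact this.symm
  have i00 : (B 0 0).im = 0 := by
    have := congrFun (congrFun hB 0) 0
    rw [Matrix.conjTranspose_apply] at this
    exact Complex.conj_eq_iff_im.mp this
  have i11 : (B 1 1).im = 0 := by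
    have := congrFun (congrFun hB 1) 1
    rw [Matrix.conjTranspose_apply] at this
    exact Complex.conj_eq_iff_im.mp this
  simp [Matrix.trace_fin_two, Matrix.mul_apply, Fin.sum_univ_two,
    Complex.add_re, Complex.mul_re, e10, i00, i11]
  ring


/-- For any ensemble of qubit states, the matrix `(C_F)ᵢⱼ = √(pᵢpⱼ) F(ρᵢ; ρⱼ)` is
positive semidefinite. -/
theorem qubit_fidelity_matrix_posSemidef {K : ℕ}
    (ρ : Fin K → Matrix (Fin 2) (Fin 2) ℂ)
    (hpsd : ∀ i, (ρ i).PosSemidef) (htr : ∀ i, (ρ i).trace = 1)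
    (p : Fin K → ℝ) (hp : ∀ i, 0 ≤ p i) (hsum : ∑ i, p i = 1) :
    (Matrix.of fun i j : Fin K =>
      Real.sqrt (p i * p j) * fidelity (ρ i) (ρ j)).PosSemidef := by
  set X : Matrix ((Fin 2 × Fin 2) ⊕ ((Fin 2 × Fin 2) ⊕ Unit)) (Fin K) ℝ :=
    Matrix.of fun r i =>
      match r with
      | Sum.inl (a, b) => Real.sqrt (p i) * ((ρ i) a b).re
      | Sum.inr (Sum.inl (a, b)) => Real.sqrt (p i) * ((ρ i) a b).im
      | Sum.inr (Sum.inr _) =>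
          Real.sqrt 2 * (Real.sqrt (p i) * Real.sqrt ((ρ i).det.re)) with hX
  have key : (Matrix.of fun i j : Fin K =>
      Real.sqrt (p i * p j) * fidelity (ρ i) (ρ j)) = Xᴴ * X := by
    ext i j
    rw [Matrix.mul_apply, Matrix.of_apply, fidelity_formula (hpsd i) (hpsd j),
      trace_mul_re (hpsd j).1, Real.sqrt_mul (hp i),
      Real.sqrt_mul (psd_det_real (hpsd i)).2]
    simp only [Matrix.conjTranspose_apply, star_trivial, hX, Matrix.of_apply,
      Fintype.sum_sum_type, Fintype.sum_prod_type, Fin.sum_univ_two,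
      Finset.univ_unique, Finset.sum_const, Finset.card_singleton, one_smul]
    ring_nf
    rw [Real.sq_sqrt (by norm_num : (0:ℝ) ≤ 2)]
  rw [key]
  exact Matrix.posSemidef_conjTranspose_mul_self X
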